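/- arXiv:1703.04367 — 2 statements merged into one kernel-verified Lean document; each statement's English description precedes it below -/
import Mathlib

section
/- Let P = (Q, T, Σ, I, O) be a population protocol and let U be the set of non-silent transitions of T. Then P has a non-silent execution (from some configuration) if and only if there exists x : U → ℚ such that Σ_{t ∈ U} x(t)·(post(t)(q) − pre(t)(q)) = 0 for every q ∈ Q, x(t) ≥ 0 for every t ∈ U, and x(t) > 0 for some t ∈ U. -/
/-! Formalization of population protocols (Angluin et al.), following
"Towards Efficient Verification of Population Protocols". -/

namespace PopProt

/-- A transition `(p, q) ↦ (p', q')`. -/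
abbrev PTrans (Q : Type*) := Q × Q × Q × Q

variable {Q : Type*} [Fintype Q] [DecidableEq Q]

/-- `pre t` is the multiset of the two states consumed by transition `t`. -/
def pre (t : PTrans Q) : Multiset Q := {t.1, t.2.1}

/-- `post t` is the multiset of the two states produced by transition `t`. -/
def post (t : PTrans Q) : Multiset Q := {t.2.2.1, t.2.2.2}

/-- A transition is silent if it cannot change the current configuration. -/
def SilentT (t : PTrans Q) : Prop := pre t = post t

instance : DecidablePred (SilentT (Q := Q)) := fun t => by
  unfold SilentT; infer_instance

/-- Transitions of the form `(p, q) ↦ (p, q)`. -/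
def IsSilentPair (t : PTrans Q) : Prop := ∃ p q : Q, t = (p, q, p, q)

instance : DecidablePred (IsSilentPair (Q := Q)) := fun t => by
  unfold IsSilentPair; infer_instance

/-- A population protocol with states `Q` and input alphabet `A`.
Configurations are multisets over `Q` of cardinality at least 2. -/
structure Protocol (Q A : Type*) [Fintype Q] [DecidableEq Q] [Fintype A] where
  T : Finset (PTrans Q)
  total : ∀ p q : Q, ∃ p' q' : Q, (p, q, p', q') ∈ T
  inp : A → Q
  out : Q → Bool

/-- `C →t C'`. -/
def StepBy (t : PTrans Q) (C C' : Multiset Q) : Prop :=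
  pre t ≤ C ∧ C' = C - pre t + post t

/-- One step of the protocol with transition set `T`. -/
def Step (T : Finset (PTrans Q)) (C C' : Multiset Q) : Prop :=
  ∃ t ∈ T, StepBy t C C'

/-- Reachability `C →* C'`. -/
def Reach (T : Finset (PTrans Q)) : Multiset Q → Multiset Q → Prop :=
  Relation.ReflTransGen (Step T)

/-- `C →w C'` for a finite sequence `w` of transitions. -/
def SeqStep (T : Finset (PTrans Q)) : List (PTrans Q) → Multiset Q → Multiset Q → Prop
  | [], C, C' => C' = C
  | t :: w, C, C' => t ∈ T ∧ ∃ D, StepBy t C D ∧ SeqStep T w D C'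

/-- An execution: an infinite sequence of configurations related by steps. -/
def IsExec (T : Finset (PTrans Q)) (e : ℕ → Multiset Q) : Prop :=
  2 ≤ Multiset.card (e 0) ∧ ∀ i, Step T (e i) (e (i + 1))

/-- Fairness: if a step `C → C'` is possible and `C` occurs infinitely often,
then the step is taken infinitely often. -/
def Fair (T : Finset (PTrans Q)) (e : ℕ → Multiset Q) : Prop :=
  ∀ C C' : Multiset Q, Step T C C' →
    {i | e i = C}.Infinite → {j | e j = C ∧ e (j + 1) = C'}.Infinite

/-- An execution is silent if it is eventually constant. -/
def SilentExec (e : ℕ → Multiset Q) : Prop := ∃ n : ℕ, ∀ i ≥ n, e i = e n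

/-- A configuration is terminal if every transition enabled at it is silent. -/
def Terminal (T : Finset (PTrans Q)) (C : Multiset Q) : Prop :=
  ∀ t ∈ T, pre t ≤ C → SilentT t

/-- `C` is a consensus configuration with output `b`. -/
def Consensus (out : Q → Bool) (C : Multiset Q) (b : Bool) : Prop :=
  ∀ q ∈ C, out q = b

/-- An execution stabilizes to `b`. -/
def Stabilizes (out : Q → Bool) (e : ℕ → Multiset Q) (b : Bool) : Prop :=
  ∃ n : ℕ, ∀ i ≥ n, Consensus out (e i) b

variable {A : Type*} [Fintype A]

/-- The initial configuration determined by input `X`. -/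
def init (P : Protocol Q A) (X : Multiset A) : Multiset Q := X.map P.inp

/-- A protocol is silent if every fair execution from every configuration is silent. -/
def IsSilentProtocol (P : Protocol Q A) : Prop :=
  ∀ e : ℕ → Multiset Q, IsExec P.T e → Fair P.T e → SilentExec e

/-- A protocol is well-specified if for every input every fair execution from the
corresponding initial configuration stabilizes to a common boolean value. -/
def WellSpecified (P : Protocol Q A) : Prop :=
  ∀ X : Multiset A, 2 ≤ Multiset.card X → ∃ b : Bool,
    ∀ e : ℕ → Multiset Q, e 0 = init P X → (∀ i, Step P.T (e i) (e (i + 1))) →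
      Fair P.T e → Stabilizes P.out e b

/-- A protocol computes the predicate `φ`. -/
def Computes (P : Protocol Q A) (φ : Multiset A → Bool) : Prop :=
  ∀ X : Multiset A, 2 ≤ Multiset.card X →
    ∀ e : ℕ → Multiset Q, e 0 = init P X → (∀ i, Step P.T (e i) (e (i + 1))) →
      Fair P.T e → Stabilizes P.out e (φ X)

/-- Termination: from every configuration some terminal configuration is reachable. -/
def Termination (P : Protocol Q A) : Prop :=
  ∀ C : Multiset Q, 2 ≤ Multiset.card C →
    ∃ C' : Multiset Q, Reach P.T C C' ∧ Terminal P.T C'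

/-- NoSplitTerminal: all terminal configurations reachable from an initial configuration
are consensus configurations with one common output. -/
def NoSplitTerminal (P : Protocol Q A) : Prop :=
  ∀ X : Multiset A, 2 ≤ Multiset.card X → ∃ b : Bool,
    ∀ C' : Multiset Q, Reach P.T (init P X) C' → Terminal P.T C' →
      Consensus P.out C' b

/-- All transitions of the form `(p, q) ↦ (p, q)`. -/
def silents (Q : Type*) [Fintype Q] [DecidableEq Q] : Finset (PTrans Q) :=
  Finset.univ.image fun pq : Q × Q => (pq.1, pq.2, pq.1, pq.2)

/-- The transition set of the induced protocol `P[S]`. -/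
def induced (S : Finset (PTrans Q)) : Finset (PTrans Q) := S ∪ silents Q

/-- `(Ts 0, …, Ts (n-1))` is an ordered partition witnessing LayeredTermination. -/
def LayeredWitness (P : Protocol Q A) (n : ℕ) (Ts : Fin n → Finset (PTrans Q)) : Prop :=
  (∀ i, (Ts i).Nonempty) ∧
  (∀ i j, i ≠ j → Disjoint (Ts i) (Ts j)) ∧
  Finset.univ.biUnion Ts = P.T ∧
  ∀ i : Fin n,
    (∀ e : ℕ → Multiset Q, IsExec (induced (Ts i)) e → SilentExec e) ∧
    (∀ C C' : Multiset Q, 2 ≤ Multiset.card C →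
      Reach (induced (Ts i)) C C' →
      Terminal (induced ((Finset.univ.filter fun j => j < i).biUnion Ts)) C →
      Terminal (induced ((Finset.univ.filter fun j => j < i).biUnion Ts)) C')

/-- LayeredTermination. -/
def LayeredTermination (P : Protocol Q A) : Prop :=
  ∃ (n : ℕ) (Ts : Fin n → Finset (PTrans Q)), LayeredWitness P n Ts

/-- `•R`, relative to the transition set `T`. -/
def preSetOf (T : Finset (PTrans Q)) (R : Finset Q) : Finset (PTrans Q) :=
  T.filter fun t => ∃ q ∈ R, q ∈ post t

/-- `R•`, relative to the transition set `T`. -/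
def postSetOf (T : Finset (PTrans Q)) (R : Finset Q) : Finset (PTrans Q) :=
  T.filter fun t => ∃ q ∈ R, q ∈ pre t

/-- `R` is a `U`-trap: `R• ∩ U ⊆ •R`. -/
def IsTrap (T U : Finset (PTrans Q)) (R : Finset Q) : Prop :=
  postSetOf T R ∩ U ⊆ preSetOf T R

/-- `R` is a `U`-siphon: `•R ∩ U ⊆ R•`. -/
def IsSiphon (T U : Finset (PTrans Q)) (R : Finset Q) : Prop :=
  preSetOf T R ∩ U ⊆ postSetOf T R

/-- The flow equations for `(C, C', x)`. -/
def FlowEq (T : Finset (PTrans Q)) (C C' : Multiset Q) (x : PTrans Q → ℕ) : Prop :=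
  ∀ q : Q, (C'.count q : ℤ) =
    (C.count q : ℤ) + ∑ t ∈ T, (x t : ℤ) * (((post t).count q : ℤ) - ((pre t).count q : ℤ))

/-- The support of `x` within `T`. -/
def suppIn (T : Finset (PTrans Q)) (x : PTrans Q → ℕ) : Finset (PTrans Q) :=
  T.filter fun t => x t ≠ 0

/-- Potential reachability `C ⇒ₓ C'` (flow equations plus trap and siphon constraints,
with `U = supp x`). -/
def PotReach (T : Finset (PTrans Q)) (C C' : Multiset Q) (x : PTrans Q → ℕ) : Prop :=
  FlowEq T C C' x ∧
  (∀ R : Finset Q, IsTrap T (suppIn T x) R → (∀ q ∈ R, q ∉ C') →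
    preSetOf T R ∩ suppIn T x = ∅) ∧
  (∀ R : Finset Q, IsSiphon T (suppIn T x) R → (∀ q ∈ R, q ∉ C) →
    postSetOf T R ∩ suppIn T x = ∅)

/-- StrongConsensus: all terminal configurations potentially reachable from an initial
configuration are consensus configurations with one common output. -/
def StrongConsensus (P : Protocol Q A) : Prop :=
  ∀ X : Multiset A, 2 ≤ Multiset.card X → ∃ b : Bool,
    ∀ (C' : Multiset Q) (x : PTrans Q → ℕ),
      PotReach P.T (init P X) C' x → Terminal P.T C' → Consensus P.out C' b

/-- `C` is `U`-dead: no transition of `U` can change `C`. -/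
def UDeadConf (U : Finset (PTrans Q)) (C : Multiset Q) : Prop :=
  ∀ t ∈ U, ∀ C' : Multiset Q, StepBy t C C' → C' = C

/-- The protocol with transitions `T` is `U`-dead: from every `U`-dead configuration,
every reachable configuration is `U`-dead. -/
def UDead (T U : Finset (PTrans Q)) : Prop :=
  ∀ C₀ : Multiset Q, 2 ≤ Multiset.card C₀ → UDeadConf U C₀ →
    ∀ C : Multiset Q, Reach T C₀ C → UDeadConf U C

end PopProt

section Helpers
open PopProt
variable {Q : Type*} [DecidableEq Q]

/-- net change of transition `t` at state `q`. -/
def PPdelta (t : PTrans Q) (q : Q) : ℤ := ((post t).count q : ℤ) - ((pre t).count q : ℤ)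

lemma PP.count_step {t : PTrans Q} {C C' : Multiset Q} (h : StepBy t C C') (q : Q) :
    (C'.count q : ℤ) = (C.count q : ℤ) + PPdelta t q := by
  have hle : (pre t).count q ≤ C.count q := Multiset.count_le_of_le q h.1
  rw [h.2, Multiset.count_add, Multiset.count_sub]
  push_cast [Nat.cast_sub hle, PPdelta]
  ring

lemma PP.silent_step {t : PTrans Q} {C C' : Multiset Q} (hs : SilentT t)
    (h : StepBy t C C') : C' = C := by
  rw [h.2, ← hs, tsub_add_cancel_of_le h.1]

lemma PP.nonsilent_step {t : PTrans Q} {C C' : Multiset Q} (hs : ¬ SilentT t)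
    (h : StepBy t C C') : C' ≠ C := by
  have : ∃ q, (pre t).count q ≠ (post t).count q := by
    by_contra hc
    push_neg at hc
    exact hs (Multiset.ext.2 hc)
  obtain ⟨q, hq⟩ := this
  intro hC
  have := PP.count_step h q
  rw [hC] at this
  have : PPdelta t q = 0 := by omega
  unfold PPdelta at this
  omega

lemma PP.card_step {t : PTrans Q} {C C' : Multiset Q} (h : StepBy t C C') :
    Multiset.card C' = Multiset.card C := by
  have h2 : Multiset.card (pre t) = 2 := rfl
  have hle : Multiset.card (pre t) ≤ Multiset.card C := Multiset.card_le_card h.1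
  have h2' : Multiset.card (post t) = 2 := rfl
  rw [h.2, Multiset.card_add, Multiset.card_sub h.1, h2, h2']
  omega

lemma PP.silent_delta {t : PTrans Q} (hs : SilentT t) (q : Q) : PPdelta t q = 0 := by
  unfold PPdelta; rw [show pre t = post t from hs]; ring

lemma PP.teles {e : ℕ → Multiset Q} {f : ℕ → PTrans Q}
    (hf : ∀ m, StepBy (f m) (e m) (e (m + 1))) (q : Q) (i : ℕ) :
    ∀ j, i ≤ j → ((e j).count q : ℤ) =
      ((e i).count q : ℤ) + ∑ m ∈ Finset.Ico i j, PPdelta (f m) q := by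
  intro j
  induction j with
  | zero => intro h; simp [Nat.le_zero.1 h]
  | succ j ih =>
    intro h
    rcases Nat.lt_or_ge i (j+1) with hlt | hge
    · have hij : i ≤ j := Nat.lt_succ_iff.1 hlt
      rw [PP.count_step (hf j) q, ih hij,
        Finset.sum_Ico_succ_top hij]
      ring
    · have hieq : i = j + 1 := le_antisymm h hge
      simp [hieq]

lemma PP.forward {Q : Type*} [Fintype Q] [DecidableEq Q]
    (T : Finset (PTrans Q)) (e : ℕ → Multiset Q)
    (hex : IsExec T e) (hns : ¬ SilentExec e) :
    (∃ x : PTrans Q → ℚ,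
      (∀ q : Q, ∑ t ∈ T.filter (fun t => ¬ SilentT t),
        x t * (((post t).count q : ℚ) - ((pre t).count q : ℚ)) = 0) ∧
      (∀ t ∈ T.filter (fun t => ¬ SilentT t), 0 ≤ x t) ∧
      (∃ t ∈ T.filter (fun t => ¬ SilentT t), 0 < x t)) := by
  obtain ⟨hcard2, hstep⟩ := hex
  choose f hfT hfS using hstep
  -- infinitely many changing steps
  have hchg : {k : ℕ | e (k + 1) ≠ e k}.Infinite := by
    by_contra hfin
    rw [Set.not_infinite] at hfin
    apply hns
    obtain ⟨N, hN⟩ := hfin.bddAbove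
    refine ⟨N + 1, ?_⟩
    intro i hi
    induction i, hi using Nat.le_induction with
    | base => rfl
    | succ i hi ih =>
      have : i ∉ {k : ℕ | e (k + 1) ≠ e k} := by
        intro hmem
        exact absurd (hN hmem) (by omega)
      simp only [Set.mem_setOf_eq, not_not] at this
      rw [this, ih]
  -- card is constant
  have hcc : ∀ i, Multiset.card (e i) = Multiset.card (e 0) := by
    intro i
    induction i with
    | zero => rfl
    | succ i ih => rw [PP.card_step (hfS i), ih]
  -- pigeonhole on configurations
  set n := Multiset.card (e 0) with hn
  let g : ℕ → Sym Q n := fun i => ⟨e i, hcc i⟩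
  obtain ⟨y, hy⟩ := Finite.exists_infinite_fiber g
  have hyI : (g ⁻¹' {y}).Infinite := Set.infinite_coe_iff.1 hy
  obtain ⟨i₀, hi₀⟩ := hyI.nonempty
  obtain ⟨k, hk, hik⟩ := hchg.exists_gt i₀
  obtain ⟨j, hj, hkj⟩ := hyI.exists_gt k
  have hej : e j = e i₀ := by
    have h1 : g j = g i₀ := by
      have := Set.mem_preimage.1 hj
      have h2 := Set.mem_preimage.1 hi₀
      simp only [Set.mem_singleton_iff] at this h2
      rw [this, h2]
    exact congrArg Subtype.val h1
  set x : PTrans Q → ℚ :=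
    fun t => ((((Finset.Ico i₀ j).filter fun m => f m = t).card : ℚ)) with hx
  have key : ∀ q : Q, ∑ t ∈ T,
      x t * (((post t).count q : ℚ) - ((pre t).count q : ℚ)) = 0 := by
    intro q
    have hz : (∑ m ∈ Finset.Ico i₀ j, PPdelta (f m) q) = 0 := by
      have := PP.teles hfS q i₀ j (le_of_lt (lt_trans hik hkj))
      rw [hej] at this
      omega
    have hmaps : ∀ m ∈ Finset.Ico i₀ j, f m ∈ T := fun m _ => hfT m
    have hfib := Finset.sum_fiberwise_of_maps_to hmaps
      (fun m => ((PPdelta (f m) q : ℚ)))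
    have inner : ∀ t ∈ T,
        (∑ m ∈ (Finset.Ico i₀ j).filter (fun m => f m = t), ((PPdelta (f m) q : ℚ)))
        = x t * (((post t).count q : ℚ) - ((pre t).count q : ℚ)) := by
      intro t _
      calc ∑ m ∈ (Finset.Ico i₀ j).filter (fun m => f m = t), ((PPdelta (f m) q : ℚ))
          = ∑ _m ∈ (Finset.Ico i₀ j).filter (fun m => f m = t), ((PPdelta t q : ℚ)) :=
            Finset.sum_congr rfl (fun m hm => by rw [(Finset.mem_filter.1 hm).2])
        _ = x t * (((post t).count q : ℚ) - ((pre t).count q : ℚ)) := by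
            rw [Finset.sum_const, nsmul_eq_mul, hx]
            unfold PPdelta
            push_cast
            ring
    have hTsum : ∑ t ∈ T, x t * (((post t).count q : ℚ) - ((pre t).count q : ℚ))
        = ∑ m ∈ Finset.Ico i₀ j, ((PPdelta (f m) q : ℚ)) := by
      rw [← hfib]
      exact Finset.sum_congr rfl (fun t ht => (inner t ht).symm)
    rw [hTsum]
    exact_mod_cast congrArg (fun z : ℤ => (z : ℚ)) hz
  refine ⟨x, ?_, ?_, ?_⟩
  · intro q
    have hsplit := Finset.sum_filter_add_sum_filter_not T (fun t => ¬ SilentT t)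
      (fun t => x t * (((post t).count q : ℚ) - ((pre t).count q : ℚ)))
    have hsil : ∑ t ∈ T.filter (fun t => ¬¬ SilentT t),
        x t * (((post t).count q : ℚ) - ((pre t).count q : ℚ)) = 0 := by
      refine Finset.sum_eq_zero (fun t ht => ?_)
      have hs : SilentT t := not_not.1 (Finset.mem_filter.1 ht).2
      rw [show pre t = post t from hs]
      simp
    rw [key q] at hsplit
    rw [hsil] at hsplit
    linarith
  · intro t _
    rw [hx]
    positivity
  · refine ⟨f k, Finset.mem_filter.2 ⟨hfT k, ?_⟩, ?_⟩
    · intro hs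
      exact hk (PP.silent_step hs (hfS k))
    · show (0:ℚ) < (((Finset.Ico i₀ j).filter fun m => f m = f k).card : ℚ)
      have hkmem : k ∈ (Finset.Ico i₀ j).filter (fun m => f m = f k) := by
        simp only [Finset.mem_filter, Finset.mem_Ico]
        exact ⟨⟨le_of_lt hik, hkj⟩, trivial⟩
      have : 0 < ((Finset.Ico i₀ j).filter (fun m => f m = f k)).card :=
        Finset.card_pos.2 ⟨k, hkmem⟩
      exact_mod_cast this

lemma PP.sum_range_getD {α M : Type*} [AddCommMonoid M] (l : List α) (d : α) (h : α → M) :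
    ∑ i ∈ Finset.range l.length, h (l.getD i d) = (l.map h).sum := by
  induction l with
  | nil => simp
  | cons a l ih =>
    rw [List.length_cons, Finset.sum_range_succ']
    simp only [List.getD_cons_succ, List.getD_cons_zero, List.map_cons, List.sum_cons]
    rw [ih]
    exact add_comm _ _

lemma PP.sum_map_repl {α M : Type*} [DecidableEq α] [AddCommMonoid M]
    (U : Finset α) (n : α → ℕ) (h : α → M) :
    ((∑ t ∈ U, Multiset.replicate (n t) t).map h).sum = ∑ t ∈ U, n t • h t := by
  induction U using Finset.induction_on with
  | empty => simp
  | insert _ _ hnotmem ih =>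
    rw [Finset.sum_insert hnotmem, Multiset.map_add, Multiset.sum_add, ih,
      Finset.sum_insert hnotmem, Multiset.map_replicate, Multiset.sum_replicate]

/-- Run a sequence of transitions from a configuration. -/
def PP.run {Q : Type*} [DecidableEq Q] (g : ℕ → PTrans Q) (C₀ : Multiset Q) : ℕ → Multiset Q
  | 0 => C₀
  | r + 1 => PP.run g C₀ r - pre (g r) + post (g r)

lemma PP.backward {Q : Type*} [Fintype Q] [DecidableEq Q]
    (T : Finset (PTrans Q)) (x : PTrans Q → ℚ)
    (hflow : ∀ q : Q, ∑ t ∈ T.filter (fun t => ¬ SilentT t),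
        x t * (((post t).count q : ℚ) - ((pre t).count q : ℚ)) = 0)
    (hnn : ∀ t ∈ T.filter (fun t => ¬ SilentT t), 0 ≤ x t)
    (hpos : ∃ t ∈ T.filter (fun t => ¬ SilentT t), 0 < x t) :
    ∃ e : ℕ → Multiset Q, IsExec T e ∧ ¬ SilentExec e := by
  classical
  set U := T.filter (fun t => ¬ SilentT t) with hU
  obtain ⟨t₀, ht₀U, hx₀⟩ := hpos
  have ht₀T : t₀ ∈ T := (Finset.mem_filter.1 ht₀U).1
  have ht₀ns : ¬ SilentT t₀ := (Finset.mem_filter.1 ht₀U).2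
  -- integer scaling
  set d := ∏ t ∈ U, (x t).den with hd
  have hdpos : 0 < d := Finset.prod_pos (fun t _ => (x t).den_pos)
  have hint : ∀ t ∈ U, ∃ k : ℕ, (k : ℚ) = x t * d := by
    intro t ht
    have hdvd : (x t).den ∣ d := Finset.dvd_prod_of_mem _ ht
    obtain ⟨c, hc⟩ := hdvd
    have hnum : (0 : ℤ) ≤ (x t).num := Rat.num_nonneg.2 (hnn t ht)
    refine ⟨(x t).num.toNat * c, ?_⟩
    have h1 : (((x t).num.toNat : ℕ) : ℚ) = ((x t).num : ℚ) := by
      exact_mod_cast congrArg (fun z : ℤ => (z : ℚ)) (Int.toNat_of_nonneg hnum)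
    have hden : ((x t).den : ℚ) ≠ 0 := by
      exact_mod_cast (x t).den_pos.ne'
    have hmul : (x t) * ((x t).den : ℚ) = ((x t).num : ℚ) := Rat.mul_den_eq_num (x t)
    push_cast
    rw [h1, hc]
    push_cast
    rw [← hmul]
    ring
  set n : PTrans Q → ℕ := fun t => if ht : t ∈ U then (hint t ht).choose else 0 with hn
  have hnq : ∀ t ∈ U, ((n t : ℚ)) = x t * d := by
    intro t ht
    rw [hn]
    simp only [dif_pos ht]
    exact (hint t ht).choose_spec
  have hflowZ : ∀ q : Q, ∑ t ∈ U, (n t : ℤ) * PPdelta t q = 0 := by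
    intro q
    have hQ : ∑ t ∈ U, ((n t : ℚ)) * (((post t).count q : ℚ) - ((pre t).count q : ℚ)) = 0 := by
      calc ∑ t ∈ U, ((n t : ℚ)) * (((post t).count q : ℚ) - ((pre t).count q : ℚ))
          = ∑ t ∈ U, (d : ℚ) * (x t * (((post t).count q : ℚ) - ((pre t).count q : ℚ))) :=
            Finset.sum_congr rfl (fun t ht => by rw [hnq t ht]; ring)
        _ = (d : ℚ) * ∑ t ∈ U, x t * (((post t).count q : ℚ) - ((pre t).count q : ℚ)) :=
            (Finset.mul_sum _ _ _).symm
        _ = 0 := by rw [hflow q]; ring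
    have hcast : ((∑ t ∈ U, (n t : ℤ) * PPdelta t q : ℤ) : ℚ) = 0 := by
      push_cast [PPdelta]
      exact hQ
    exact_mod_cast hcast
  have hn₀ : n t₀ ≠ 0 := by
    intro h0
    have := hnq t₀ ht₀U
    rw [h0] at this
    have hgt : (0 : ℚ) < x t₀ * d := by
      apply mul_pos hx₀
      exact_mod_cast hdpos
    rw [← this] at hgt
    norm_num at hgt
  -- the cycle
  set m : Multiset (PTrans Q) := ∑ t ∈ U, Multiset.replicate (n t) t with hm
  set L : List (PTrans Q) := m.toList with hL
  set len := L.length with hlendef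
  have hmemU : ∀ s ∈ m, s ∈ U := by
    intro s hs
    obtain ⟨t, ht, hst⟩ := Multiset.mem_sum.1 hs
    rw [Multiset.eq_of_mem_replicate hst]
    exact ht
  have ht₀m : t₀ ∈ m :=
    Multiset.mem_sum.2 ⟨t₀, ht₀U, Multiset.mem_replicate.2 ⟨hn₀, rfl⟩⟩
  have ht₀L : t₀ ∈ L := Multiset.mem_toList.2 ht₀m
  have hlen : 0 < len := List.length_pos_of_mem ht₀L
  set g : ℕ → PTrans Q := fun r => L.getD r t₀ with hg
  set C₀ : Multiset Q := (L.map pre).sum with hC₀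
  set P : ℕ → Multiset Q := PP.run g C₀ with hP
  have hP0 : P 0 = C₀ := rfl
  have hPs : ∀ r, P (r + 1) = P r - pre (g r) + post (g r) := fun r => rfl
  have hgeq : ∀ r, (hr : r < len) → g r = L[r] := by
    intro r hr
    rw [hg]
    exact List.getD_eq_getElem L t₀ hr
  -- invariant
  have hinv : ∀ r, r ≤ len → ((L.drop r).map pre).sum ≤ P r := by
    intro r
    induction r with
    | zero => intro _; rw [List.drop_zero, hP0]
    | succ r ih =>
      intro h
      have hr : r < len := by omega
      have hdrop : L.drop r = L[r] :: L.drop (r + 1) := List.drop_eq_getElem_cons hr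
      have h1 := ih (le_of_lt hr)
      rw [hdrop] at h1
      simp only [List.map_cons, List.sum_cons] at h1
      rw [← hgeq r hr] at h1
      have h2 : ((L.drop (r + 1)).map pre).sum ≤ P r - pre (g r) :=
        le_tsub_of_add_le_left h1
      calc ((L.drop (r + 1)).map pre).sum ≤ P r - pre (g r) := h2
        _ ≤ P r - pre (g r) + post (g r) := Multiset.le_add_right _ _
        _ = P (r + 1) := (hPs r).symm
  have hpre : ∀ r, r < len → pre (g r) ≤ P r := by
    intro r hr
    have h1 := hinv r (le_of_lt hr)
    rw [List.drop_eq_getElem_cons hr] at h1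
    simp only [List.map_cons, List.sum_cons] at h1
    rw [← hgeq r hr] at h1
    exact le_trans (Multiset.le_add_right _ _) h1
  have hstepP : ∀ r, r < len → StepBy (g r) (P r) (P (r + 1)) :=
    fun r hr => ⟨hpre r hr, hPs r⟩
  have hcount : ∀ r, r ≤ len → ∀ q : Q, ((P r).count q : ℤ) =
      (C₀.count q : ℤ) + ∑ i ∈ Finset.range r, PPdelta (g i) q := by
    intro r
    induction r with
    | zero => intro _ q; rw [hP0]; simp
    | succ r ih =>
      intro h q
      rw [PP.count_step (hstepP r (by omega)) q, ih (by omega) q, Finset.sum_range_succ]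
      ring
  have hPlen : P len = P 0 := by
    rw [hP0]
    refine Multiset.ext.2 (fun q => ?_)
    have h1 := hcount len le_rfl q
    have h2 : ∑ i ∈ Finset.range len, PPdelta (g i) q = 0 := by
      have h3 : ∑ i ∈ Finset.range len, PPdelta (g i) q
          = (L.map (fun t => PPdelta t q)).sum := by
        rw [hlendef, hg]
        exact PP.sum_range_getD L t₀ (fun t => PPdelta t q)
      have h4 : (L.map (fun t => PPdelta t q)).sum
          = ∑ t ∈ U, (n t : ℤ) * PPdelta t q := by
        have h5 : (m.map (fun t => PPdelta t q)).sum = ∑ t ∈ U, n t • PPdelta t q := by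
          rw [hm]
          exact PP.sum_map_repl U n (fun t => PPdelta t q)
        have h6 : m.map (fun t => PPdelta t q) = ((L.map (fun t => PPdelta t q) : List ℤ) : Multiset ℤ) := by
          conv_lhs => rw [← Multiset.coe_toList m]
          rw [Multiset.map_coe, hL]
        rw [h6, Multiset.sum_coe] at h5
        rw [h5]
        exact Finset.sum_congr rfl (fun t _ => by rw [nsmul_eq_mul])
      rw [h3, h4]
      exact hflowZ q
    rw [h2] at h1
    omega
  -- membership of transitions
  have hgT : ∀ r, r < len → g r ∈ T := by
    intro r hr
    have hmem : g r ∈ L := by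
      rw [hgeq r hr]
      exact List.getElem_mem hr
    exact (Finset.mem_filter.1 (hmemU _ (Multiset.mem_toList.1 hmem))).1
  -- the execution
  refine ⟨fun i => P (i % len), ⟨?_, ?_⟩, ?_⟩
  · -- cardinality
    show 2 ≤ Multiset.card (P (0 % len))
    rw [Nat.zero_mod, hP0]
    have h1 : pre (g 0) ≤ C₀ := by rw [← hP0]; exact hpre 0 hlen
    have h2 : Multiset.card (pre (g 0)) = 2 := rfl
    calc (2 : ℕ) = Multiset.card (pre (g 0)) := h2.symm
      _ ≤ Multiset.card C₀ := Multiset.card_le_card h1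
  · -- steps
    have hEsucc : ∀ i, P ((i + 1) % len) = P (i % len + 1) := by
      intro i
      have hr : i % len < len := Nat.mod_lt _ hlen
      have hmod : (i + 1) % len = (i % len + 1) % len :=
        ((Nat.mod_modEq i len).add_right 1).symm
      rw [hmod]
      rcases eq_or_lt_of_le (Nat.succ_le_of_lt hr) with h | h
      · have h' : i % len + 1 = len := h
        rw [h', Nat.mod_self, hPlen]
      · rw [Nat.mod_eq_of_lt h]
    intro i
    have hr : i % len < len := Nat.mod_lt _ hlen
    refine ⟨g (i % len), hgT _ hr, ?_⟩
    show StepBy (g (i % len)) (P (i % len)) (P ((i + 1) % len))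
    rw [hEsucc i]
    exact hstepP _ hr
  · -- non-silent
    intro ⟨N, hN⟩
    obtain ⟨r₀, hr₀, hLr₀⟩ := List.mem_iff_getElem.1 ht₀L
    have hgr₀ : g r₀ = t₀ := by rw [hgeq r₀ hr₀, hLr₀]
    set i := r₀ + len * (N + 1) with hi
    have himod : i % len = r₀ := by
      rw [hi, Nat.add_mul_mod_self_left, Nat.mod_eq_of_lt hr₀]
    have hiN : N ≤ i := by
      have : N + 1 ≤ len * (N + 1) := Nat.le_mul_of_pos_left _ hlen
      omega
    have hEsucc : ∀ k, P ((k + 1) % len) = P (k % len + 1) := by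
      intro k
      have hr : k % len < len := Nat.mod_lt _ hlen
      have hmod : (k + 1) % len = (k % len + 1) % len :=
        ((Nat.mod_modEq k len).add_right 1).symm
      rw [hmod]
      rcases eq_or_lt_of_le (Nat.succ_le_of_lt hr) with h | h
      · have h' : k % len + 1 = len := h
        rw [h', Nat.mod_self, hPlen]
      · rw [Nat.mod_eq_of_lt h]
    have hne : P (r₀ + 1) ≠ P r₀ := by
      apply PP.nonsilent_step ht₀ns
      rw [← hgr₀]
      exact hstepP r₀ hr₀
    apply hne
    have e1 : P (i % len) = P (N % len) := hN i hiN
    have e2 : P ((i + 1) % len) = P (N % len) := hN (i + 1) (by omega)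
    rw [hEsucc i, himod] at e2
    rw [himod] at e1
    rw [e1, e2]

end Helpers

open PopProt in
/-- Lemma: a protocol has a non-silent execution iff there is a nonnegative, nonzero
rational solution of the flow equations supported on the non-silent transitions. -/
theorem nonsilent_execution_iff_flow_solution
    {Q A : Type*} [Fintype Q] [DecidableEq Q] [Nonempty Q] [Fintype A] [Nonempty A]
    (P : Protocol Q A) :
    (∃ e : ℕ → Multiset Q, IsExec P.T e ∧ ¬ SilentExec e) ↔
    (∃ x : PTrans Q → ℚ,
      (∀ q : Q, ∑ t ∈ P.T.filter (fun t => ¬ SilentT t),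
        x t * (((post t).count q : ℚ) - ((pre t).count q : ℚ)) = 0) ∧
      (∀ t ∈ P.T.filter (fun t => ¬ SilentT t), 0 ≤ x t) ∧
      (∃ t ∈ P.T.filter (fun t => ¬ SilentT t), 0 < x t)) := by
  constructor
  · rintro ⟨e, hex, hns⟩
    exact PP.forward P.T e hex hns
  · rintro ⟨x, h1, h2, h3⟩
    exact PP.backward P.T x h1 h2 h3
end

section
/- Every population protocol satisfying LayeredTermination and StrongConsensus is silent and well-specified. -/
/-! Formalization of population protocols (Angluin et al.), following
"Towards Efficient Verification of Population Protocols". -/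

namespace PopProt

variable {Q : Type*} [Fintype Q] [DecidableEq Q]

variable {A : Type*} [Fintype A]

section Helpers
set_option linter.unusedSectionVars false

variable {Q : Type*} [Fintype Q] [DecidableEq Q]

lemma mem_silents_silent {t : PTrans Q} (h : t ∈ silents Q) : SilentT t := by
  obtain ⟨pq, -, rfl⟩ := Finset.mem_image.mp h
  rfl

lemma stepBy_count {t : PTrans Q} {C C' : Multiset Q} (h : StepBy t C C') (q : Q) :
    (C'.count q : ℤ) = (C.count q : ℤ) - ((pre t).count q : ℤ) + ((post t).count q : ℤ) := by
  obtain ⟨hle, rfl⟩ := h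
  have hc : (pre t).count q ≤ C.count q := Multiset.count_le_of_le q hle
  rw [Multiset.count_add, Multiset.count_sub]
  omega

lemma stepBy_card {t : PTrans Q} {C C' : Multiset Q} (h : StepBy t C C') :
    Multiset.card C' = Multiset.card C := by
  obtain ⟨hle, rfl⟩ := h
  have h2 : Multiset.card (pre t) ≤ Multiset.card C := Multiset.card_le_card hle
  rw [Multiset.card_add, Multiset.card_sub hle]
  have hp : Multiset.card (pre t) = 2 := rfl
  have hq : Multiset.card (post t) = 2 := rfl
  omega

lemma stepBy_ne {t : PTrans Q} {C C' : Multiset Q} (h : StepBy t C C')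
    (hns : ¬ SilentT t) : C' ≠ C := by
  intro hEq
  apply hns
  show pre t = post t
  ext q
  have h1 := stepBy_count h q
  rw [hEq] at h1
  omega

lemma stepBy_silent {t : PTrans Q} {C C' : Multiset Q} (h : StepBy t C C')
    (hs : SilentT t) : C' = C := by
  obtain ⟨hle, rfl⟩ := h
  rw [← hs, tsub_add_cancel_of_le hle]

lemma terminal_step {T : Finset (PTrans Q)} {C C' : Multiset Q}
    (hT : Terminal T C) (h : Step T C C') : C' = C := by
  obtain ⟨t, ht, hstep⟩ := h
  exact stepBy_silent hstep (hT t ht hstep.1)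

lemma step_card {T : Finset (PTrans Q)} {C C' : Multiset Q} (h : Step T C C') :
    Multiset.card C' = Multiset.card C := by
  obtain ⟨t, -, hstep⟩ := h
  exact stepBy_card hstep

lemma reach_card {T : Finset (PTrans Q)} {C C' : Multiset Q} (h : Reach T C C') :
    Multiset.card C' = Multiset.card C := by
  induction h with
  | refl => rfl
  | tail _ hstep ih => rw [step_card hstep, ih]

lemma reach_induced_subset {S T : Finset (PTrans Q)} (hST : S ⊆ T) {C C' : Multiset Q}
    (h : Reach (induced S) C C') : Reach T C C' := by
  induction h with
  | refl => exact Relation.ReflTransGen.refl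
  | tail _ hstep ih =>
    obtain ⟨t, ht, hstep'⟩ := hstep
    rcases Finset.mem_union.mp ht with h1 | h2
    · exact ih.tail ⟨t, hST h1, hstep'⟩
    · rw [stepBy_silent hstep' (mem_silents_silent h2)]; exact ih

lemma exists_terminal_of_silent {S : Finset (PTrans Q)}
    (hsil : ∀ e : ℕ → Multiset Q, IsExec S e → SilentExec e)
    (C : Multiset Q) (hC : 2 ≤ Multiset.card C) :
    ∃ D, Reach S C D ∧ Terminal S D := by
  by_contra h
  push_neg at h
  have key : ∀ D : {D : Multiset Q // Reach S C D},
      ∃ D' : {D : Multiset Q // Reach S C D}, Step S D.1 D'.1 ∧ D'.1 ≠ D.1 := by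
    rintro ⟨D, hD⟩
    have hnt := h D hD
    unfold Terminal at hnt
    push_neg at hnt
    obtain ⟨t, htS, htpre, htns⟩ := hnt
    exact ⟨⟨D - pre t + post t, hD.tail ⟨t, htS, htpre, rfl⟩⟩,
      ⟨t, htS, htpre, rfl⟩, stepBy_ne ⟨htpre, rfl⟩ htns⟩
  choose f hf1 hf2 using key
  set e : ℕ → {D : Multiset Q // Reach S C D} :=
    fun k => f^[k] ⟨C, Relation.ReflTransGen.refl⟩ with he
  have hsucc : ∀ k, e (k + 1) = f (e k) := by
    intro k; rw [he]; simp [Function.iterate_succ_apply']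
  have hexec : IsExec S (fun k => (e k).1) := by
    refine ⟨?_, ?_⟩
    · show 2 ≤ Multiset.card (e 0).1
      simpa [he] using hC
    · intro k
      show Step S (e k).1 (e (k + 1)).1
      rw [hsucc k]
      exact hf1 (e k)
  obtain ⟨n, hn⟩ := hsil _ hexec
  have h1 : (e (n + 1)).1 = (e n).1 := hn (n + 1) (by omega)
  rw [hsucc n] at h1
  exact hf2 (e n) h1

lemma termination_of_layered {A : Type*} [Fintype A] (P : Protocol Q A)
    (h1 : LayeredTermination P) : Termination P := by
  obtain ⟨n, Ts, hne, hdis, hun, hlay⟩ := h1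
  intro C hC
  suffices h : ∀ k, k ≤ n → ∃ D, Reach P.T C D ∧ 2 ≤ Multiset.card D ∧
      Terminal (induced ((Finset.univ.filter fun j : Fin n => (j : ℕ) < k).biUnion Ts)) D by
    obtain ⟨D, hre, hcard, hterm⟩ := h n le_rfl
    refine ⟨D, hre, fun t ht hpre => hterm t ?_ hpre⟩
    apply Finset.mem_union_left
    have hfil : (Finset.univ.filter fun j : Fin n => (j : ℕ) < n) = Finset.univ := by
      apply Finset.filter_true_of_mem; intro j _; exact j.isLt
    rw [hfil, hun]; exact ht
  intro k
  induction k with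
  | zero =>
    intro _
    refine ⟨C, Relation.ReflTransGen.refl, hC, ?_⟩
    intro t ht _
    have : (Finset.univ.filter fun j : Fin n => (j : ℕ) < 0) = ∅ := by simp
    rw [this, Finset.biUnion_empty] at ht
    rcases Finset.mem_union.mp ht with h | h
    · simp at h
    · exact mem_silents_silent h
  | succ k ih =>
    intro hk
    obtain ⟨D, hre, hcard, hterm⟩ := ih (by omega)
    set i : Fin n := ⟨k, by omega⟩ with hi
    obtain ⟨hsilent, hpres⟩ := hlay i
    obtain ⟨E, hreE, htermE⟩ := exists_terminal_of_silent hsilent D hcard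
    have hfilter : (Finset.univ.filter fun j : Fin n => j < i)
        = (Finset.univ.filter fun j : Fin n => (j : ℕ) < k) := by
      apply Finset.filter_congr; intro j _; simp [Fin.lt_def, hi]
    have htermE' := hpres D E hcard hreE (by rwa [hfilter])
    rw [hfilter] at htermE'
    have hTsub : Ts i ⊆ P.T := by
      intro t ht; rw [← hun]; exact Finset.mem_biUnion.mpr ⟨i, Finset.mem_univ i, ht⟩
    refine ⟨E, hre.trans (reach_induced_subset hTsub hreE),
      by rw [reach_card hreE]; exact hcard, ?_⟩
    intro t ht hpre
    rcases Finset.mem_union.mp ht with h | h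
    · obtain ⟨j, hj, htj⟩ := Finset.mem_biUnion.mp h
      have hj' : (j : ℕ) < k + 1 := (Finset.mem_filter.mp hj).2
      rcases Nat.lt_succ_iff_lt_or_eq.mp hj' with hlt | heq
      · exact htermE' t (Finset.mem_union_left _ (Finset.mem_biUnion.mpr
          ⟨j, Finset.mem_filter.mpr ⟨Finset.mem_univ j, hlt⟩, htj⟩)) hpre
      · have hji : j = i := Fin.ext heq
        exact htermE t (Finset.mem_union_left _ (hji ▸ htj)) hpre
    · exact mem_silents_silent h
lemma exec_card {T : Finset (PTrans Q)} {e : ℕ → Multiset Q}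
    (hstep : ∀ i, Step T (e i) (e (i + 1))) (i : ℕ) :
    Multiset.card (e i) = Multiset.card (e 0) := by
  induction i with
  | zero => rfl
  | succ i ih => rw [step_card (hstep i), ih]

lemma reach_exec {T : Finset (PTrans Q)} {e : ℕ → Multiset Q}
    (hstep : ∀ i, Step T (e i) (e (i + 1))) (n : ℕ) : Reach T (e 0) (e n) := by
  induction n with
  | zero => exact Relation.ReflTransGen.refl
  | succ n ih => exact ih.tail (hstep n)

lemma fair_inf_reach {T : Finset (PTrans Q)} {e : ℕ → Multiset Q} (hf : Fair T e)
    {C D : Multiset Q} (hC : {i | e i = C}.Infinite) (hR : Reach T C D) :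
    {i | e i = D}.Infinite := by
  induction hR with
  | refl => exact hC
  | @tail B D _ hstep ih =>
    have hinf := hf _ _ hstep ih
    have himg : ((fun j => j + 1) '' {j | e j = B ∧ e (j + 1) = D}) ⊆ {i | e i = D} := by
      rintro _ ⟨j, ⟨-, hj2⟩, rfl⟩
      exact hj2
    exact Set.Infinite.mono himg (hinf.image (fun a _ b _ h => by omega))

lemma exists_inf_conf {T : Finset (PTrans Q)} {e : ℕ → Multiset Q}
    (hstep : ∀ i, Step T (e i) (e (i + 1))) :
    ∃ C : Multiset Q, {i | e i = C}.Infinite := by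
  haveI hfin : Finite (Sym Q (Multiset.card (e 0))) := Finite.of_fintype _
  obtain ⟨y, hy⟩ := @Finite.exists_infinite_fiber ℕ (Sym Q (Multiset.card (e 0))) _ hfin
    (fun i => (⟨e i, exec_card hstep i⟩ : Sym Q (Multiset.card (e 0))))
  refine ⟨y.1, Set.Infinite.mono ?_ (Set.infinite_coe_iff.mp hy)⟩
  intro i hi
  have : (⟨e i, exec_card hstep i⟩ : Sym Q (Multiset.card (e 0))) = y := hi
  exact congrArg Subtype.val this

lemma core_lemma {A : Type*} [Fintype A] (P : Protocol Q A) (hterm : Termination P)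
    {e : ℕ → Multiset Q} (hc : 2 ≤ Multiset.card (e 0))
    (hstep : ∀ i, Step P.T (e i) (e (i + 1))) (hf : Fair P.T e) :
    ∃ n, Terminal P.T (e n) ∧ ∀ i ≥ n, e i = e n := by
  obtain ⟨C, hC⟩ := exists_inf_conf hstep
  obtain ⟨i0, hi0⟩ := hC.nonempty
  have hcC : 2 ≤ Multiset.card C := by
    rw [← hi0, exec_card hstep i0]; exact hc
  obtain ⟨D, hre, htermD⟩ := hterm C hcC
  obtain ⟨n, hn⟩ := (fair_inf_reach hf hC hre).nonempty
  have hnD : e n = D := hn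
  have hstay : ∀ j, e (n + j) = e n := by
    intro j
    induction j with
    | zero => rfl
    | succ j ih =>
      have ht : Terminal P.T (e (n + j)) := by rw [ih, hnD]; exact htermD
      have := terminal_step ht (hstep (n + j))
      rw [show n + (j + 1) = n + j + 1 from rfl, this, ih]
  refine ⟨n, by rw [hnD]; exact htermD, ?_⟩
  intro i hi
  have := hstay (i - n)
  rwa [Nat.add_sub_cancel' hi] at this
lemma seqStep_mem {T : Finset (PTrans Q)} {w : List (PTrans Q)} {C C' : Multiset Q}
    (h : SeqStep T w C C') : ∀ t ∈ w, t ∈ T := by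
  induction w generalizing C with
  | nil => simp
  | cons t w ih =>
    obtain ⟨htT, D, hD, hw⟩ := h
    intro u hu
    rcases List.mem_cons.mp hu with rfl | hu
    · exact htT
    · exact ih hw u hu

lemma seqStep_flow {T : Finset (PTrans Q)} {w : List (PTrans Q)} {C C' : Multiset Q}
    (h : SeqStep T w C C') (q : Q) :
    (C'.count q : ℤ) = (C.count q : ℤ) +
      ∑ t ∈ T, (w.count t : ℤ) * (((post t).count q : ℤ) - ((pre t).count q : ℤ)) := by
  induction w generalizing C with
  | nil =>
    have : C' = C := h
    subst this
    simp
  | cons t w ih =>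
    obtain ⟨htT, D, hD, hw⟩ := h
    have h1 := stepBy_count hD q
    have h2 := ih hw
    have key : ∀ u ∈ T, (((t :: w).count u : ℤ)) * (((post u).count q : ℤ) - ((pre u).count q : ℤ))
        = ((w.count u : ℤ)) * (((post u).count q : ℤ) - ((pre u).count q : ℤ))
          + (if u = t then ((post u).count q : ℤ) - ((pre u).count q : ℤ) else 0) := by
      intro u _
      by_cases hu : u = t
      · subst hu
        rw [List.count_cons_self, if_pos rfl]
        push_cast
        ring
      · rw [List.count_cons_of_ne (Ne.symm hu), if_neg hu]
        ring
    rw [Finset.sum_congr rfl key, Finset.sum_add_distrib, Finset.sum_ite_eq' T t _, if_pos htT]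
    linarith

lemma seqStep_count_mono {T : Finset (PTrans Q)} {R : Finset Q} {w : List (PTrans Q)}
    {C C' : Multiset Q} (h : SeqStep T w C C')
    (hno : ∀ u ∈ w, ∀ q ∈ R, q ∉ pre u) :
    ∀ q ∈ R, C.count q ≤ C'.count q := by
  induction w generalizing C with
  | nil =>
    have : C' = C := h
    subst this
    exact fun q _ => le_rfl
  | cons t w ih =>
    obtain ⟨htT, D, hD, hw⟩ := h
    intro q hq
    have h1 := stepBy_count hD q
    have hpre0 : (pre t).count q = 0 :=
      Multiset.count_eq_zero.mpr (hno t List.mem_cons_self q hq)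
    have h2 := ih hw (fun u hu => hno u (List.mem_cons_of_mem t hu)) q hq
    omega

lemma seqStep_trap {T : Finset (PTrans Q)} {R : Finset Q} {w : List (PTrans Q)}
    {C C' : Multiset Q} (h : SeqStep T w C C')
    (H : ∀ u ∈ w, (∃ q ∈ R, q ∈ pre u) → ∃ q ∈ R, q ∈ post u)
    (hC' : ∀ q ∈ R, q ∉ C') :
    ∀ u ∈ w, ∀ q ∈ R, q ∉ post u := by
  induction w generalizing C with
  | nil => simp
  | cons t w ih =>
    obtain ⟨htT, D, hD, hw⟩ := h
    have ihw := ih hw (fun u hu => H u (List.mem_cons_of_mem t hu))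
    have hnopre : ∀ u ∈ w, ∀ q ∈ R, q ∉ pre u := by
      intro u hu q hq hqpre
      obtain ⟨q', hq', hq'p⟩ := H u (List.mem_cons_of_mem t hu) ⟨q, hq, hqpre⟩
      exact ihw u hu q' hq' hq'p
    intro u hu
    rcases List.mem_cons.mp hu with rfl | hu'
    · intro q hq hqpost
      have hcount := stepBy_count hD q
      have hpost1 : 1 ≤ (post u).count q := Multiset.one_le_count_iff_mem.mpr hqpost
      have hprele : (pre u).count q ≤ C.count q := Multiset.count_le_of_le q hD.1
      have hmono := seqStep_count_mono hw hnopre q hq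
      have hc0 : C'.count q = 0 := Multiset.count_eq_zero.mpr (hC' q hq)
      omega
    · exact ihw u hu'

lemma seqStep_siphon {T : Finset (PTrans Q)} {R : Finset Q} {w : List (PTrans Q)}
    {C C' : Multiset Q} (h : SeqStep T w C C')
    (H : ∀ u ∈ w, (∃ q ∈ R, q ∈ post u) → ∃ q ∈ R, q ∈ pre u)
    (hC : ∀ q ∈ R, q ∉ C) :
    ∀ u ∈ w, ∀ q ∈ R, q ∉ pre u := by
  induction w generalizing C with
  | nil => simp
  | cons t w ih =>
    obtain ⟨htT, D, hD, hw⟩ := h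
    have hpret : ∀ q ∈ R, q ∉ pre t := by
      intro q hq hqp
      exact hC q hq (Multiset.mem_of_le hD.1 hqp)
    have hpostt : ∀ q ∈ R, q ∉ post t := by
      intro q hq hqp
      obtain ⟨q', hq', hq'p⟩ := H t List.mem_cons_self ⟨q, hq, hqp⟩
      exact hpret q' hq' hq'p
    have hD0 : ∀ q ∈ R, q ∉ D := by
      intro q hq hqD
      have h1 := stepBy_count hD q
      have h2 : C.count q = 0 := Multiset.count_eq_zero.mpr (hC q hq)
      have h3 : (post t).count q = 0 := Multiset.count_eq_zero.mpr (hpostt q hq)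
      have h4 : 1 ≤ D.count q := Multiset.one_le_count_iff_mem.mpr hqD
      have h5 : (pre t).count q ≤ C.count q := Multiset.count_le_of_le q hD.1
      omega
    have ihw := ih hw (fun u hu => H u (List.mem_cons_of_mem t hu)) hD0
    intro u hu
    rcases List.mem_cons.mp hu with rfl | hu'
    · exact hpret
    · exact ihw u hu'

lemma reach_seqStep {T : Finset (PTrans Q)} {C C' : Multiset Q} (h : Reach T C C') :
    ∃ w, SeqStep T w C C' := by
  induction h using Relation.ReflTransGen.head_induction_on with
  | refl => exact ⟨[], rfl⟩
  | head hstep _ ih =>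
    obtain ⟨w, hw⟩ := ih
    obtain ⟨t, ht, hs⟩ := hstep
    exact ⟨t :: w, ht, _, hs, hw⟩

lemma potReach_of_reach {T : Finset (PTrans Q)} {C C' : Multiset Q} (h : Reach T C C') :
    ∃ x, PotReach T C C' x := by
  obtain ⟨w, hw⟩ := reach_seqStep h
  have hsupp : ∀ v ∈ w, v ∈ suppIn T fun t => w.count t := by
    intro v hv
    refine Finset.mem_filter.mpr ⟨seqStep_mem hw v hv, ?_⟩
    exact (List.count_pos_iff.mpr hv).ne'
  refine ⟨fun t => w.count t, fun q => seqStep_flow hw q, ?_, ?_⟩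
  · intro R hR hC'
    rw [Finset.eq_empty_iff_forall_notMem]
    intro u hu
    obtain ⟨hu1, hu2⟩ := Finset.mem_inter.mp hu
    obtain ⟨huT, q, hq1, hq2⟩ := Finset.mem_filter.mp hu1
    have humem : u ∈ w := by
      have := (Finset.mem_filter.mp hu2).2
      exact List.count_pos_iff.mp (Nat.pos_of_ne_zero this)
    have H : ∀ v ∈ w, (∃ q ∈ R, q ∈ pre v) → ∃ q ∈ R, q ∈ post v := by
      intro v hv hvpre
      have hmem : v ∈ postSetOf T R ∩ suppIn T fun t => w.count t :=
        Finset.mem_inter.mpr ⟨Finset.mem_filter.mpr ⟨seqStep_mem hw v hv, hvpre⟩, hsupp v hv⟩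
      exact (Finset.mem_filter.mp (hR hmem)).2
    exact seqStep_trap hw H hC' u humem q hq1 hq2
  · intro R hR hC0
    rw [Finset.eq_empty_iff_forall_notMem]
    intro u hu
    obtain ⟨hu1, hu2⟩ := Finset.mem_inter.mp hu
    obtain ⟨huT, q, hq1, hq2⟩ := Finset.mem_filter.mp hu1
    have humem : u ∈ w := by
      have := (Finset.mem_filter.mp hu2).2
      exact List.count_pos_iff.mp (Nat.pos_of_ne_zero this)
    have H : ∀ v ∈ w, (∃ q ∈ R, q ∈ post v) → ∃ q ∈ R, q ∈ pre v := by
      intro v hv hvpost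
      have hmem : v ∈ preSetOf T R ∩ suppIn T fun t => w.count t :=
        Finset.mem_inter.mpr ⟨Finset.mem_filter.mpr ⟨seqStep_mem hw v hv, hvpost⟩, hsupp v hv⟩
      exact (Finset.mem_filter.mp (hR hmem)).2
    exact seqStep_siphon hw H hC0 u humem q hq1 hq2
end Helpers
end PopProt
open PopProt in
/-- Theorem: every protocol satisfying LayeredTermination and StrongConsensus
is silent and well-specified. -/
theorem layeredTermination_strongConsensus_implies_silent_wellSpecified
    {Q A : Type*} [Fintype Q] [DecidableEq Q] [Nonempty Q] [Fintype A] [Nonempty A]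
    (P : Protocol Q A) (h1 : LayeredTermination P) (h2 : StrongConsensus P) :
    IsSilentProtocol P ∧ WellSpecified P := by
  have hterm : Termination P := termination_of_layered P h1
  constructor
  · intro e he hf
    obtain ⟨n, -, hn⟩ := core_lemma P hterm he.1 he.2 hf
    exact ⟨n, hn⟩
  · intro X hX
    obtain ⟨b, hb⟩ := h2 X hX
    refine ⟨b, ?_⟩
    intro e he0 hstep hf
    have hcard : 2 ≤ Multiset.card (e 0) := by
      rw [he0]
      show 2 ≤ Multiset.card (Multiset.map P.inp X)
      rwa [Multiset.card_map]
    obtain ⟨n, htn, hn⟩ := core_lemma P hterm hcard hstep hf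
    have hre : Reach P.T (init P X) (e n) := by
      rw [← he0]; exact reach_exec hstep n
    obtain ⟨x, hx⟩ := potReach_of_reach hre
    have hcons := hb (e n) x hx htn
    exact ⟨n, fun i hi => by rw [hn i hi]; exact hcons⟩
end
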